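/- Let G(z) = Σ_{p=0}^d z^p A_p + Σ_{j=1}^k w_j(z) E_j be a symmetric rational matrix polynomial (all A_p and E_j complex symmetric) and λ ∈ ℂ with all w_j(λ) defined and G(λ) invertible. Then the structured eigenvalue backward error restricted to symmetric perturbation tuples equals the unstructured one: η^{sym}(G,λ) = η(G,λ) = σ_min(G(λ)) / ‖(1, λ, …, λ^d, w₁(λ), …, w_k(λ))‖. -/

import Mathlib

open Matrix

/-- The spectral (operator 2-) norm of a complex matrix. -/
noncomputable def specNorm {n : ℕ} (A : Matrix (Fin n) (Fin n) ℂ) : ℝ :=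
  ‖Matrix.toEuclideanCLM (𝕜 := ℂ) A‖

/-- The Euclidean norm of a complex vector. -/
noncomputable def evNorm {n : ℕ} (v : Fin n → ℂ) : ℝ :=
  ‖(WithLp.equiv 2 (Fin n → ℂ)).symm v‖

/-- The smallest singular value of a complex matrix. -/
noncomputable def sigmaMin {n : ℕ} (A : Matrix (Fin n) (Fin n) ℂ) : ℝ :=
  sInf {r : ℝ | ∃ x : Fin n → ℂ, evNorm x = 1 ∧ r = evNorm (A.mulVec x)}

set_option synthInstance.maxHeartbeats 1000000
set_option maxHeartbeats 1000000

section Aux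

variable {n : ℕ}

lemma clm_apply (A : Matrix (Fin n) (Fin n) ℂ) (x : Fin n → ℂ) :
    Matrix.toEuclideanCLM (𝕜 := ℂ) A ((WithLp.equiv 2 (Fin n → ℂ)).symm x)
      = (WithLp.equiv 2 (Fin n → ℂ)).symm (A.mulVec x) := by
  rfl

lemma evNorm_nonneg (v : Fin n → ℂ) : 0 ≤ evNorm v := norm_nonneg _

lemma evNorm_mulVec_le (A : Matrix (Fin n) (Fin n) ℂ) (x : Fin n → ℂ) :
    evNorm (A.mulVec x) ≤ specNorm A * evNorm x := by
  rw [evNorm, ← clm_apply]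
  exact (Matrix.toEuclideanCLM (𝕜 := ℂ) A).le_opNorm _

lemma specNorm_le_bound {A : Matrix (Fin n) (Fin n) ℂ} {C : ℝ} (hC : 0 ≤ C)
    (h : ∀ x, evNorm (A.mulVec x) ≤ C * evNorm x) : specNorm A ≤ C := by
  apply ContinuousLinearMap.opNorm_le_bound _ hC
  intro v
  have := h (WithLp.equiv 2 (Fin n → ℂ) v)
  rwa [evNorm, ← clm_apply, Equiv.symm_apply_apply] at this

lemma specNorm_nonneg (A : Matrix (Fin n) (Fin n) ℂ) : 0 ≤ specNorm A := norm_nonneg _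

lemma specNorm_smul (c : ℂ) (A : Matrix (Fin n) (Fin n) ℂ) :
    specNorm (c • A) = ‖c‖ * specNorm A := by
  rw [specNorm, _root_.map_smul]
  exact norm_smul c (Matrix.toEuclideanCLM (𝕜 := ℂ) A)

lemma evNorm_smul (c : ℂ) (v : Fin n → ℂ) : evNorm (c • v) = ‖c‖ * evNorm v := by
  rw [evNorm, evNorm, ← norm_smul]; rfl


lemma inner_ev (u v : Fin n → ℂ) :
    (inner ℂ ((WithLp.equiv 2 (Fin n → ℂ)).symm u) ((WithLp.equiv 2 (Fin n → ℂ)).symm v) : ℂ)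
      = star u ⬝ᵥ v :=
  by rw [dotProduct_comm]; rfl

lemma evNorm_eq (v : Fin n → ℂ) : evNorm v = Real.sqrt (∑ i, ‖v i‖ ^ 2) := by
  rw [evNorm, EuclideanSpace.norm_eq]
  congr 1

lemma evNorm_star (v : Fin n → ℂ) : evNorm (star v) = evNorm v := by
  simp [evNorm_eq, Pi.star_apply]

lemma dot_self (x : Fin n → ℂ) : star x ⬝ᵥ x = ((evNorm x : ℂ)) ^ 2 := by
  rw [← inner_ev]
  exact inner_self_eq_norm_sq_to_K _

lemma abs_dot_le (u v : Fin n → ℂ) : ‖u ⬝ᵥ v‖ ≤ evNorm u * evNorm v := by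
  have h : u ⬝ᵥ v = star (star u) ⬝ᵥ v := by simp
  rw [h, ← inner_ev]
  calc ‖(inner ℂ ((WithLp.equiv 2 (Fin n → ℂ)).symm (star u))
      ((WithLp.equiv 2 (Fin n → ℂ)).symm v) : ℂ)‖
      ≤ evNorm (star u) * evNorm v := norm_inner_le_norm _ _
    _ = evNorm u * evNorm v := by rw [evNorm_star]

lemma vecMulVec_mulVec (u v z : Fin n → ℂ) :
    (vecMulVec u v).mulVec z = (v ⬝ᵥ z) • u := by
  funext i
  simp [vecMulVec_apply, mulVec, dotProduct, Finset.sum_mul, Finset.mul_sum]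
  ring_nf

lemma specNorm_vecMulVec_le (u v : Fin n → ℂ) :
    specNorm (vecMulVec u v) ≤ evNorm u * evNorm v := by
  apply specNorm_le_bound (mul_nonneg (evNorm_nonneg u) (evNorm_nonneg v))
  intro z
  rw [vecMulVec_mulVec, evNorm_smul]
  calc ‖v ⬝ᵥ z‖ * evNorm u ≤ (evNorm v * evNorm z) * evNorm u :=
        mul_le_mul_of_nonneg_right (abs_dot_le v z) (evNorm_nonneg u)
    _ = evNorm u * evNorm v * evNorm z := by ring

lemma key_ident (μ α β : ℂ) (s : ℝ) :
    ‖μ * α + s * β‖ ^ 2 + ‖s * α - (starRingEnd ℂ) μ * β‖ ^ 2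
      = (‖μ‖ ^ 2 + s ^ 2) * (‖α‖ ^ 2 + ‖β‖ ^ 2) := by
  simp only [Complex.sq_norm, Complex.normSq_apply, Complex.add_re, Complex.add_im,
    Complex.sub_re, Complex.sub_im, Complex.mul_re, Complex.mul_im,
    Complex.ofReal_re, Complex.ofReal_im, Complex.conj_re, Complex.conj_im]
  ring


lemma star_dot (u v : Fin n → ℂ) :
    star u ⬝ᵥ star v = (starRingEnd ℂ) (u ⬝ᵥ v) := by
  simp [dotProduct, Pi.star_apply, map_sum, ← _root_.map_mul]

lemma evNorm_pos_of_ne {v : Fin n → ℂ} (hv : v ≠ 0) : 0 < evNorm v := by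
  rw [evNorm]
  rw [norm_pos_iff]
  intro h
  apply hv
  have := congrArg (WithLp.equiv 2 (Fin n → ℂ)) h
  simpa using this

lemma comb_norm_sq {x y : Fin n → ℂ} (hx : evNorm x = 1) (hy : evNorm y = 1)
    (hxy : star x ⬝ᵥ y = 0) (c₁ c₂ : ℂ) :
    evNorm (c₁ • x + c₂ • y) ^ 2 = ‖c₁‖ ^ 2 + ‖c₂‖ ^ 2 := by
  rw [evNorm, show (WithLp.equiv 2 (Fin n → ℂ)).symm (c₁ • x + c₂ • y) = c₁ • (WithLp.equiv 2 (Fin n → ℂ)).symm x + c₂ • (WithLp.equiv 2 (Fin n → ℂ)).symm y from rfl]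
  rw [norm_add_sq (𝕜 := ℂ)]
  have h1 : (inner ℂ (c₁ • (WithLp.equiv 2 (Fin n → ℂ)).symm x)
      (c₂ • (WithLp.equiv 2 (Fin n → ℂ)).symm y) : ℂ) = 0 := by
    rw [inner_smul_left, inner_smul_right, inner_ev, hxy]
    ring
  rw [h1]
  simp only [norm_smul, map_zero, mul_zero, add_zero]
  have hx' : ‖(WithLp.equiv 2 (Fin n → ℂ)).symm x‖ = 1 := hx
  have hy' : ‖(WithLp.equiv 2 (Fin n → ℂ)).symm y‖ = 1 := hy
  rw [hx', hy']
  ring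

lemma bessel_two {x y : Fin n → ℂ} (hx : evNorm x = 1) (hy : evNorm y = 1)
    (hxy : star x ⬝ᵥ y = 0) (z : Fin n → ℂ) :
    ‖star x ⬝ᵥ z‖ ^ 2 + ‖star y ⬝ᵥ z‖ ^ 2 ≤ evNorm z ^ 2 := by
  set e := (WithLp.equiv 2 (Fin n → ℂ)).symm with he
  have hyx : star y ⬝ᵥ x = 0 := by
    rw [← star_star x, star_dot, dotProduct_comm, hxy]; simp
  have horth : Orthonormal ℂ ![e x, e y] := by
    rw [orthonormal_iff_ite]
    intro i j
    fin_cases i <;> fin_cases j <;>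
      simp only [Fin.zero_eta, Fin.mk_one, Matrix.cons_val_zero, Matrix.cons_val_one, Matrix.head_cons]
    · rw [he, inner_ev, dot_self, hx]; norm_num
    · rw [he, inner_ev, hxy]; norm_num
    · rw [he, inner_ev, hyx]; norm_num
    · rw [he, inner_ev, dot_self, hy]; norm_num
  have hb := horth.sum_inner_products_le (s := Finset.univ) (e z)
  rw [Fin.sum_univ_two] at hb
  simp only [Matrix.cons_val_zero, Matrix.cons_val_one, Matrix.head_cons, he, inner_ev] at hb
  simpa [evNorm] using hb

lemma vecMulVec_transpose' (u v : Fin n → ℂ) :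
    (vecMulVec u v)ᵀ = vecMulVec v u := by
  funext i j
  simp [vecMulVec_apply, transpose_apply, mul_comm]

lemma sq_le_of_sq_le {a b : ℝ} (hb : 0 ≤ b) (h : a ^ 2 ≤ b ^ 2) (ha : 0 ≤ a) : a ≤ b := by
  nlinarith

/-- The symmetric structured mapping theorem: for a unit vector `x` and any `b`, there is a
complex symmetric matrix `Δ` with `Δ x = b` and spectral norm at most `‖b‖`. -/
lemma exists_symmetric_mapping (x b : Fin n → ℂ) (hx : evNorm x = 1) :
    ∃ Δ : Matrix (Fin n) (Fin n) ℂ, Δᵀ = Δ ∧ Δ.mulVec x = b ∧ specNorm Δ ≤ evNorm b := by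
  classical
  set μ : ℂ := x ⬝ᵥ b with hμ
  set w : Fin n → ℂ := b - μ • star x with hwdef
  have hxx : star x ⬝ᵥ x = 1 := by rw [dot_self, hx]; norm_num
  have hxsx : x ⬝ᵥ star x = 1 := by rw [dotProduct_comm]; exact hxx
  have hsx_unit : evNorm (star x) = 1 := by rw [evNorm_star, hx]
  have hxw : x ⬝ᵥ w = 0 := by
    rw [hwdef, dotProduct_sub, dotProduct_smul, smul_eq_mul, hxsx, ← hμ]
    ring
  by_cases hw : w = 0
  · have hb : b = μ • star x := by
      have h := hw; rw [hwdef, sub_eq_zero] at h; exact h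
    refine ⟨μ • vecMulVec (star x) (star x), ?_, ?_, ?_⟩
    · rw [transpose_smul, vecMulVec_transpose']
    · rw [smul_mulVec, vecMulVec_mulVec, hxx, one_smul, ← hb]
    · calc specNorm (μ • vecMulVec (star x) (star x))
          = ‖μ‖ * specNorm (vecMulVec (star x) (star x)) := specNorm_smul _ _
        _ ≤ ‖μ‖ * (evNorm (star x) * evNorm (star x)) := by
            apply mul_le_mul_of_nonneg_left (specNorm_vecMulVec_le _ _) (norm_nonneg _)
        _ = ‖μ‖ := by rw [hsx_unit]; ring
        _ = evNorm b := by rw [hb, evNorm_smul, hsx_unit]; ring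
  · have hs : 0 < evNorm w := evNorm_pos_of_ne hw
    set s : ℝ := evNorm w with hsdef
    have hsne : (s : ℂ) ≠ 0 := by
      simpa using (ne_of_gt hs)
    set q : Fin n → ℂ := ((s : ℂ))⁻¹ • w with hqdef
    have hq1 : evNorm q = 1 := by
      rw [hqdef, evNorm_smul, norm_inv, Complex.norm_real, Real.norm_eq_abs, abs_of_pos hs, ← hsdef]
      field_simp
    have hsqw : (s : ℂ) • q = w := by
      rw [hqdef, smul_smul, mul_inv_cancel₀ hsne, one_smul]
    have hxq : x ⬝ᵥ q = 0 := by
      rw [hqdef, dotProduct_smul, hxw, smul_zero]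
    have hqx : q ⬝ᵥ x = 0 := by rw [dotProduct_comm]; exact hxq
    have hb : b = μ • star x + (s : ℂ) • q := by
      rw [hsqw, hwdef]; abel
    have hsxq : star (star x) ⬝ᵥ q = 0 := by rw [star_star]; exact hxq
    have hxsq : star x ⬝ᵥ star q = 0 := by rw [star_dot, hxq, map_zero]
    have hsq_unit : evNorm (star q) = 1 := by rw [evNorm_star]; exact hq1
    set Δ : Matrix (Fin n) (Fin n) ℂ :=
      μ • vecMulVec (star x) (star x)
        + (s : ℂ) • (vecMulVec q (star x) + vecMulVec (star x) q)
        - (starRingEnd ℂ) μ • vecMulVec q q with hΔ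
    have hmul : ∀ z, Δ.mulVec z
        = (μ * (star x ⬝ᵥ z) + (s : ℂ) * (q ⬝ᵥ z)) • star x
          + ((s : ℂ) * (star x ⬝ᵥ z) - (starRingEnd ℂ) μ * (q ⬝ᵥ z)) • q := by
      intro z
      rw [hΔ, sub_mulVec, add_mulVec, smul_mulVec, smul_mulVec, smul_mulVec,
        add_mulVec, vecMulVec_mulVec, vecMulVec_mulVec, vecMulVec_mulVec, vecMulVec_mulVec]
      funext i
      simp only [Pi.add_apply, Pi.sub_apply, Pi.smul_apply, smul_eq_mul]
      ring
    have hΔx : Δ.mulVec x = b := by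
      rw [hmul x, hxx, hqx, hb]
      simp
    have hbnorm : evNorm b ^ 2 = ‖μ‖ ^ 2 + s ^ 2 := by
      rw [hb, comb_norm_sq hsx_unit hq1 hsxq, Complex.norm_real, Real.norm_eq_abs, abs_of_pos hs]
    have hnorm : ∀ z, evNorm (Δ.mulVec z) ≤ evNorm b * evNorm z := by
      intro z
      apply sq_le_of_sq_le (mul_nonneg (evNorm_nonneg b) (evNorm_nonneg z)) _ (evNorm_nonneg _)
      have h1 : evNorm (Δ.mulVec z) ^ 2
          = ‖μ * (star x ⬝ᵥ z) + (s : ℂ) * (q ⬝ᵥ z)‖ ^ 2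
            + ‖(s : ℂ) * (star x ⬝ᵥ z) - (starRingEnd ℂ) μ * (q ⬝ᵥ z)‖ ^ 2 := by
        rw [hmul z, comb_norm_sq hsx_unit hq1 hsxq]
      have h2 := key_ident μ (star x ⬝ᵥ z) (q ⬝ᵥ z) s
      have h3 : ‖star x ⬝ᵥ z‖ ^ 2 + ‖q ⬝ᵥ z‖ ^ 2 ≤ evNorm z ^ 2 := by
        have hbes := bessel_two hx hsq_unit hxsq z
        rwa [star_star] at hbes
      rw [h1, h2, mul_pow, hbnorm]
      have hnn : (0:ℝ) ≤ ‖μ‖ ^ 2 + s ^ 2 := by positivity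
      exact mul_le_mul_of_nonneg_left h3 hnn
    refine ⟨Δ, ?_, hΔx, specNorm_le_bound (evNorm_nonneg b) hnorm⟩
    rw [hΔ]
    simp only [transpose_sub, transpose_add, transpose_smul, vecMulVec_transpose']
    rw [add_comm (vecMulVec (star x) q) (vecMulVec q (star x))]

lemma sigmaMin_bddBelow (G : Matrix (Fin n) (Fin n) ℂ) :
    BddBelow {r : ℝ | ∃ x : Fin n → ℂ, evNorm x = 1 ∧ r = evNorm (G.mulVec x)} := by
  refine ⟨0, ?_⟩
  rintro r ⟨x, -, rfl⟩
  exact evNorm_nonneg _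

lemma sigmaMin_le (G : Matrix (Fin n) (Fin n) ℂ) (x : Fin n → ℂ) (hx : evNorm x = 1) :
    sigmaMin G ≤ evNorm (G.mulVec x) :=
  csInf_le (sigmaMin_bddBelow G) ⟨x, hx, rfl⟩

lemma exists_sigmaMin (hn : 0 < n) (G : Matrix (Fin n) (Fin n) ℂ) :
    ∃ x : Fin n → ℂ, evNorm x = 1 ∧ sigmaMin G = evNorm (G.mulVec x) := by
  classical
  have hcpt : IsCompact (Metric.sphere (0 : EuclideanSpace ℂ (Fin n)) 1) :=
    isCompact_sphere _ _
  have hne : (Metric.sphere (0 : EuclideanSpace ℂ (Fin n)) 1).Nonempty := by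
    refine ⟨EuclideanSpace.single (⟨0, hn⟩ : Fin n) (1 : ℂ), ?_⟩
    rw [mem_sphere_zero_iff_norm, EuclideanSpace.norm_single]
    simp
  have hcont : Continuous fun v : EuclideanSpace ℂ (Fin n) =>
      ‖Matrix.toEuclideanCLM (𝕜 := ℂ) G v‖ :=
    (Matrix.toEuclideanCLM (𝕜 := ℂ) G).continuous.norm
  obtain ⟨v, hvmem, hmin⟩ := hcpt.exists_isMinOn hne hcont.continuousOn
  set x : Fin n → ℂ := WithLp.equiv 2 (Fin n → ℂ) v with hxdef
  have hev : (WithLp.equiv 2 (Fin n → ℂ)).symm x = v := by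
    rw [hxdef]; exact Equiv.symm_apply_apply _ _
  have hx1 : evNorm x = 1 := by
    rw [evNorm, hev]
    exact mem_sphere_zero_iff_norm.mp hvmem
  have hGx : evNorm (G.mulVec x) = ‖Matrix.toEuclideanCLM (𝕜 := ℂ) G v‖ := by
    rw [evNorm, ← clm_apply, hev]
  refine ⟨x, hx1, le_antisymm (sigmaMin_le G x hx1) ?_⟩
  refine le_csInf ⟨evNorm (G.mulVec x), ⟨x, hx1, rfl⟩⟩ ?_
  rintro r ⟨y, hy, rfl⟩
  have hymem : (WithLp.equiv 2 (Fin n → ℂ)).symm y ∈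
      Metric.sphere (0 : EuclideanSpace ℂ (Fin n)) 1 := by
    rw [mem_sphere_zero_iff_norm]; exact hy
  have := isMinOn_iff.mp hmin _ hymem
  rw [hGx]
  calc ‖Matrix.toEuclideanCLM (𝕜 := ℂ) G v‖
      ≤ ‖Matrix.toEuclideanCLM (𝕜 := ℂ) G ((WithLp.equiv 2 (Fin n → ℂ)).symm y)‖ := this
    _ = evNorm (G.mulVec y) := by rw [clm_apply]; rfl

lemma specNorm_sum_le {ι : Type*} (s : Finset ι) (f : ι → Matrix (Fin n) (Fin n) ℂ) :
    specNorm (∑ i ∈ s, f i) ≤ ∑ i ∈ s, specNorm (f i) := by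
  rw [specNorm, map_sum]
  exact norm_sum_le _ _

lemma specNorm_add_le (M N : Matrix (Fin n) (Fin n) ℂ) :
    specNorm (M + N) ≤ specNorm M + specNorm N := by
  rw [specNorm, map_add]
  exact norm_add_le _ _

lemma evNorm_zero : evNorm (0 : Fin n → ℂ) = 0 := by
  simp [evNorm_eq]

lemma ne_zero_of_evNorm_one {x : Fin n → ℂ} (hx : evNorm x = 1) : x ≠ 0 := by
  intro h
  rw [h, evNorm_zero] at hx
  norm_num at hx

lemma final_combine {Ssym Sun : Set ℝ} (X : ℝ) (hsub : Ssym ⊆ Sun)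
    (hbddun : BddBelow Sun) (hbddsym : BddBelow Ssym)
    (hlow : ∀ r ∈ Sun, X ≤ r) {v : ℝ} (hmem : v ∈ Ssym) (hvle : v ≤ X) :
    sInf Ssym = sInf Sun ∧ sInf Sun = X := by
  have h5 : sInf Ssym ≤ X := le_trans (csInf_le hbddsym hmem) hvle
  have h6 : X ≤ sInf Sun := le_csInf ⟨v, hsub hmem⟩ hlow
  have h7 : sInf Sun ≤ sInf Ssym := csInf_le_csInf hbddun ⟨v, hmem⟩ hsub
  exact ⟨le_antisymm (h5.trans h6) h7, le_antisymm (h7.trans h5) h6⟩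


end Aux

/-- For a symmetric rational matrix polynomial, the structured eigenvalue backward error
with respect to symmetric perturbations equals the unstructured one, which equals
`σ_min(G(λ)) / ‖(1,λ,…,λ^d,w₁(λ),…,w_k(λ))‖`. -/
theorem symmetric_structured_backward_error_eq_unstructured {n d k : ℕ}
    (A : Fin (d + 1) → Matrix (Fin n) (Fin n) ℂ)
    (E : Fin k → Matrix (Fin n) (Fin n) ℂ)
    (hA : ∀ p, (A p)ᵀ = A p) (hE : ∀ j, (E j)ᵀ = E j)
    (lam : ℂ) (w : Fin k → ℂ)
    (hinv : IsUnit (∑ p : Fin (d + 1), lam ^ (p : ℕ) • A p + ∑ j, w j • E j)) :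
    sInf {r : ℝ |
        ∃ (ΔA : Fin (d + 1) → Matrix (Fin n) (Fin n) ℂ)
          (ΔE : Fin k → Matrix (Fin n) (Fin n) ℂ),
          (∀ p, (ΔA p)ᵀ = ΔA p) ∧ (∀ j, (ΔE j)ᵀ = ΔE j) ∧
          (∑ p : Fin (d + 1), lam ^ (p : ℕ) • (A p - ΔA p)
              + ∑ j, w j • (E j - ΔE j)).det = 0 ∧
          r = Real.sqrt (∑ p : Fin (d + 1), specNorm (ΔA p) ^ 2
              + ∑ j, specNorm (ΔE j) ^ 2)} =
      sInf {r : ℝ |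
        ∃ (ΔA : Fin (d + 1) → Matrix (Fin n) (Fin n) ℂ)
          (ΔE : Fin k → Matrix (Fin n) (Fin n) ℂ),
          (∑ p : Fin (d + 1), lam ^ (p : ℕ) • (A p - ΔA p)
              + ∑ j, w j • (E j - ΔE j)).det = 0 ∧
          r = Real.sqrt (∑ p : Fin (d + 1), specNorm (ΔA p) ^ 2
              + ∑ j, specNorm (ΔE j) ^ 2)} ∧
    sInf {r : ℝ |
        ∃ (ΔA : Fin (d + 1) → Matrix (Fin n) (Fin n) ℂ)
          (ΔE : Fin k → Matrix (Fin n) (Fin n) ℂ),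
          (∑ p : Fin (d + 1), lam ^ (p : ℕ) • (A p - ΔA p)
              + ∑ j, w j • (E j - ΔE j)).det = 0 ∧
          r = Real.sqrt (∑ p : Fin (d + 1), specNorm (ΔA p) ^ 2
              + ∑ j, specNorm (ΔE j) ^ 2)} =
      sigmaMin (∑ p : Fin (d + 1), lam ^ (p : ℕ) • A p + ∑ j, w j • E j) /
        Real.sqrt (∑ p : Fin (d + 1), ‖lam ^ (p : ℕ)‖ ^ 2
          + ∑ j, ‖w j‖ ^ 2) := by
  classical
  set G : Matrix (Fin n) (Fin n) ℂ :=
    ∑ p : Fin (d + 1), lam ^ (p : ℕ) • A p + ∑ j, w j • E j with hGdef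
  set S : ℝ := ∑ p : Fin (d + 1), ‖lam ^ (p : ℕ)‖ ^ 2
      + ∑ j, ‖w j‖ ^ 2 with hSdef
  have hS1 : (1 : ℝ) ≤ S := by
    have h1 : (1 : ℝ) ≤ ∑ p : Fin (d + 1), ‖lam ^ (p : ℕ)‖ ^ 2 := by
      have := Finset.single_le_sum
        (f := fun p : Fin (d + 1) => ‖lam ^ (p : ℕ)‖ ^ 2)
        (fun i _ => by positivity) (Finset.mem_univ (0 : Fin (d + 1)))
      simpa using this
    have h2 : (0 : ℝ) ≤ ∑ j, ‖w j‖ ^ 2 := by positivity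
    rw [hSdef]; linarith
  have hSpos : (0 : ℝ) < S := lt_of_lt_of_le one_pos hS1
  have hsqS : 0 < Real.sqrt S := Real.sqrt_pos.mpr hSpos
  have hre : ∀ (ΔA : Fin (d + 1) → Matrix (Fin n) (Fin n) ℂ)
      (ΔE : Fin k → Matrix (Fin n) (Fin n) ℂ),
      ∑ p : Fin (d + 1), lam ^ (p : ℕ) • (A p - ΔA p) + ∑ j, w j • (E j - ΔE j)
        = G - (∑ p : Fin (d + 1), lam ^ (p : ℕ) • ΔA p + ∑ j, w j • ΔE j) := by
    intro ΔA ΔE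
    rw [hGdef]
    simp only [smul_sub, Finset.sum_sub_distrib]
    abel
  -- lower bound for all elements of the unstructured set
  have hlow : ∀ r ∈ {r : ℝ |
      ∃ (ΔA : Fin (d + 1) → Matrix (Fin n) (Fin n) ℂ)
        (ΔE : Fin k → Matrix (Fin n) (Fin n) ℂ),
        (∑ p : Fin (d + 1), lam ^ (p : ℕ) • (A p - ΔA p)
            + ∑ j, w j • (E j - ΔE j)).det = 0 ∧
        r = Real.sqrt (∑ p : Fin (d + 1), specNorm (ΔA p) ^ 2
            + ∑ j, specNorm (ΔE j) ^ 2)},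
      sigmaMin G / Real.sqrt S ≤ r := by
    rintro r ⟨ΔA, ΔE, hdet, rfl⟩
    set Δf : Matrix (Fin n) (Fin n) ℂ :=
      ∑ p : Fin (d + 1), lam ^ (p : ℕ) • ΔA p + ∑ j, w j • ΔE j with hΔf
    rw [hre ΔA ΔE] at hdet
    obtain ⟨v, hvne, hv0⟩ := (Matrix.exists_mulVec_eq_zero_iff).mpr hdet
    have hc : 0 < evNorm v := evNorm_pos_of_ne hvne
    set x : Fin n → ℂ := ((evNorm v : ℂ))⁻¹ • v with hxdef
    have hx1 : evNorm x = 1 := by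
      rw [hxdef, evNorm_smul, norm_inv, Complex.norm_real, Real.norm_eq_abs, abs_of_pos hc]
      field_simp
    have hGx : G.mulVec x = Δf.mulVec x := by
      have h1 : (G - Δf).mulVec x = 0 := by
        rw [hxdef, mulVec_smul, hv0, smul_zero]
      rw [sub_mulVec] at h1
      exact sub_eq_zero.mp h1
    have h1 : sigmaMin G ≤ evNorm (Δf.mulVec x) := by
      rw [← hGx]; exact sigmaMin_le G x hx1
    have h2 : evNorm (Δf.mulVec x) ≤ specNorm Δf := by
      have := evNorm_mulVec_le Δf x
      rwa [hx1, mul_one] at this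
    have h3 : specNorm Δf ≤ ∑ p : Fin (d + 1), ‖lam ^ (p : ℕ)‖ * specNorm (ΔA p)
        + ∑ j, ‖w j‖ * specNorm (ΔE j) := by
      calc specNorm Δf
          ≤ specNorm (∑ p : Fin (d + 1), lam ^ (p : ℕ) • ΔA p)
            + specNorm (∑ j, w j • ΔE j) := specNorm_add_le _ _
        _ ≤ (∑ p : Fin (d + 1), specNorm (lam ^ (p : ℕ) • ΔA p))
            + ∑ j, specNorm (w j • ΔE j) :=
            add_le_add (specNorm_sum_le _ _) (specNorm_sum_le _ _)
        _ = _ := by simp only [specNorm_smul]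
    have h4 : ∑ p : Fin (d + 1), ‖lam ^ (p : ℕ)‖ * specNorm (ΔA p)
        + ∑ j, ‖w j‖ * specNorm (ΔE j)
        ≤ Real.sqrt S
          * Real.sqrt (∑ p : Fin (d + 1), specNorm (ΔA p) ^ 2 + ∑ j, specNorm (ΔE j) ^ 2) := by
      have hcs := Real.sum_mul_le_sqrt_mul_sqrt (Finset.univ : Finset (Fin (d + 1) ⊕ Fin k))
        (Sum.elim (fun p => ‖lam ^ (p : ℕ)‖) fun j => ‖w j‖)
        (Sum.elim (fun p => specNorm (ΔA p)) fun j => specNorm (ΔE j))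
      rw [Fintype.sum_sum_type, Fintype.sum_sum_type, Fintype.sum_sum_type] at hcs
      simp only [Sum.elim_inl, Sum.elim_inr, mul_pow] at hcs
      rw [hSdef]
      convert hcs using 4 <;> rw [mul_pow]
    have hchain : sigmaMin G ≤ Real.sqrt S
        * Real.sqrt (∑ p : Fin (d + 1), specNorm (ΔA p) ^ 2 + ∑ j, specNorm (ΔE j) ^ 2) :=
      le_trans h1 (le_trans h2 (le_trans h3 h4))
    rw [div_le_iff₀ hsqS, mul_comm]
    exact hchain
  rcases Nat.eq_zero_or_pos n with hn | hn
  · -- degenerate case `n = 0`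
    subst hn
    haveI : IsEmpty (Fin 0) := inferInstance
    have hdet1 : ∀ M : Matrix (Fin 0) (Fin 0) ℂ, M.det = 1 := fun M => Matrix.det_isEmpty
    have hempty1 : {r : ℝ |
        ∃ (ΔA : Fin (d + 1) → Matrix (Fin 0) (Fin 0) ℂ)
          (ΔE : Fin k → Matrix (Fin 0) (Fin 0) ℂ),
          (∀ p, (ΔA p)ᵀ = ΔA p) ∧ (∀ j, (ΔE j)ᵀ = ΔE j) ∧
          (∑ p : Fin (d + 1), lam ^ (p : ℕ) • (A p - ΔA p)
              + ∑ j, w j • (E j - ΔE j)).det = 0 ∧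
          r = Real.sqrt (∑ p : Fin (d + 1), specNorm (ΔA p) ^ 2
              + ∑ j, specNorm (ΔE j) ^ 2)} = ∅ := by
      ext r
      simp only [Set.mem_setOf_eq, Set.mem_empty_iff_false, iff_false]
      rintro ⟨ΔA, ΔE, -, -, hdet, -⟩
      rw [hdet1] at hdet
      norm_num at hdet
    have hempty2 : {r : ℝ |
        ∃ (ΔA : Fin (d + 1) → Matrix (Fin 0) (Fin 0) ℂ)
          (ΔE : Fin k → Matrix (Fin 0) (Fin 0) ℂ),
          (∑ p : Fin (d + 1), lam ^ (p : ℕ) • (A p - ΔA p)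
              + ∑ j, w j • (E j - ΔE j)).det = 0 ∧
          r = Real.sqrt (∑ p : Fin (d + 1), specNorm (ΔA p) ^ 2
              + ∑ j, specNorm (ΔE j) ^ 2)} = ∅ := by
      ext r
      simp only [Set.mem_setOf_eq, Set.mem_empty_iff_false, iff_false]
      rintro ⟨ΔA, ΔE, hdet, -⟩
      rw [hdet1] at hdet
      norm_num at hdet
    have hsig : sigmaMin G = 0 := by
      rw [sigmaMin]
      have : {r : ℝ | ∃ x : Fin 0 → ℂ, evNorm x = 1 ∧ r = evNorm (G.mulVec x)} = ∅ := by
        ext r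
        simp only [Set.mem_setOf_eq, Set.mem_empty_iff_false, iff_false]
        rintro ⟨x, hx, -⟩
        rw [evNorm_eq] at hx
        simp at hx
      rw [this, Real.sInf_empty]
    rw [hempty1, hempty2, hsig]
    norm_num
  · -- main case `n ≥ 1`
    obtain ⟨x, hx1, hσ⟩ := exists_sigmaMin hn G
    obtain ⟨Δ, hΔt, hΔx, hΔn⟩ := exists_symmetric_mapping x (G.mulVec x) hx1
    set ΔA0 : Fin (d + 1) → Matrix (Fin n) (Fin n) ℂ :=
      fun p => ((starRingEnd ℂ) (lam ^ (p : ℕ)) / (S : ℂ)) • Δ with hΔA0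
    set ΔE0 : Fin k → Matrix (Fin n) (Fin n) ℂ :=
      fun j => ((starRingEnd ℂ) (w j) / (S : ℂ)) • Δ with hΔE0
    have hScne : (S : ℂ) ≠ 0 := by
      simpa using ne_of_gt hSpos
    have hz : ∀ z : ℂ, z • (((starRingEnd ℂ) z / (S : ℂ)) • Δ)
        = ((‖z‖ ^ 2 / S : ℝ) : ℂ) • Δ := by
      intro z
      rw [smul_smul]
      congr 1
      rw [← mul_div_assoc, Complex.mul_conj, ← Complex.sq_norm]
      push_cast
      ring
    have hcoef : ∑ p : Fin (d + 1), lam ^ (p : ℕ) • ΔA0 p + ∑ j, w j • ΔE0 j = Δ := by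
      simp only [hΔA0, hΔE0, hz]
      rw [← Finset.sum_smul, ← Finset.sum_smul, ← add_smul]
      have hc1 : (∑ p : Fin (d + 1), ((‖lam ^ (p : ℕ)‖ ^ 2 / S : ℝ) : ℂ))
          + ∑ j, ((‖w j‖ ^ 2 / S : ℝ) : ℂ)
          = (((∑ p : Fin (d + 1), ‖lam ^ (p : ℕ)‖ ^ 2 / S
              + ∑ j, ‖w j‖ ^ 2 / S : ℝ)) : ℂ) := by
        push_cast
        ring
      rw [hc1]
      have hc2 : (∑ p : Fin (d + 1), ‖lam ^ (p : ℕ)‖ ^ 2 / S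
          + ∑ j, ‖w j‖ ^ 2 / S : ℝ) = 1 := by
        rw [← Finset.sum_div, ← Finset.sum_div, ← add_div, ← hSdef,
          div_self (ne_of_gt hSpos)]
      rw [hc2]
      simp
    have hdet0 : (∑ p : Fin (d + 1), lam ^ (p : ℕ) • (A p - ΔA0 p)
        + ∑ j, w j • (E j - ΔE0 j)).det = 0 := by
      rw [hre ΔA0 ΔE0, hcoef]
      apply Matrix.exists_mulVec_eq_zero_iff.mp
      exact ⟨x, ne_zero_of_evNorm_one hx1, by rw [sub_mulVec, hΔx, sub_self]⟩
    have hsymA : ∀ p, (ΔA0 p)ᵀ = ΔA0 p := by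
      intro p; rw [hΔA0]; simp only [transpose_smul, hΔt]
    have hsymE : ∀ j, (ΔE0 j)ᵀ = ΔE0 j := by
      intro j; rw [hΔE0]; simp only [transpose_smul, hΔt]
    have habs : ∀ z : ℂ, ‖(starRingEnd ℂ) z / (S : ℂ)‖ = ‖z‖ / S := by
      intro z
      rw [norm_div, Complex.norm_conj, Complex.norm_real, Real.norm_eq_abs, abs_of_pos hSpos]
    have hval : (∑ p : Fin (d + 1), specNorm (ΔA0 p) ^ 2 + ∑ j, specNorm (ΔE0 j) ^ 2)
        = specNorm Δ ^ 2 / S := by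
      simp only [hΔA0, hΔE0, specNorm_smul, habs]
      have hsq : ∀ a : ℝ, (a / S * specNorm Δ) ^ 2 = a ^ 2 * (specNorm Δ ^ 2 / S ^ 2) := by
        intro a; field_simp
      simp only [hsq]
      rw [← Finset.sum_mul, ← Finset.sum_mul, ← add_mul, ← hSdef]
      field_simp
    have hvle : Real.sqrt (∑ p : Fin (d + 1), specNorm (ΔA0 p) ^ 2
        + ∑ j, specNorm (ΔE0 j) ^ 2) ≤ sigmaMin G / Real.sqrt S := by
      rw [hval, Real.sqrt_div (sq_nonneg _), Real.sqrt_sq (specNorm_nonneg Δ)]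
      exact (div_le_div_iff_of_pos_right hsqS).mpr (le_of_le_of_eq hΔn hσ.symm)
    refine final_combine (sigmaMin G / Real.sqrt S) ?_ ?_ ?_ hlow
      (v := Real.sqrt (∑ p : Fin (d + 1), specNorm (ΔA0 p) ^ 2 + ∑ j, specNorm (ΔE0 j) ^ 2))
      ⟨ΔA0, ΔE0, hsymA, hsymE, hdet0, rfl⟩ hvle
    · rintro r ⟨ΔA, ΔE, -, -, hdet, hr⟩
      exact ⟨ΔA, ΔE, hdet, hr⟩
    · exact ⟨0, by rintro r ⟨ΔA, ΔE, -, rfl⟩; exact Real.sqrt_nonneg _⟩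
    · exact ⟨0, by rintro r ⟨ΔA, ΔE, -, -, -, rfl⟩; exact Real.sqrt_nonneg _⟩
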